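/- Let Q : A → A/⟨B⟩ be the Gabriel quotient of a locally coherent Grothendieck symmetric monoidal category A by the localizing subcategory ⟨B⟩ generated by a Serre ⊗-ideal B of A^fp. Let f : 𝟙 → F be a morphism in A with F ⊗-flat, and suppose every finitely presented subobject M ⊆ ker(f) satisfies f ⊗ id_M = 0 and hence M ∈ B. Then ker(f) ∈ ⟨B⟩ and Q(f) is a monomorphism in A/⟨B⟩. -/

import Mathlib

open CategoryTheory CategoryTheory.Limits CategoryTheory.MonoidalCategory
  CategoryTheory.Pretriangulated

namespace Balmer

universe w v u v₂ u₂ v₃ u₃ v₄ u₄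

variable {C : Type u} [Category.{v} C]

/-- An object is finitely presented if its coYoneda functor preserves filtered colimits. -/
def IsFP (X : C) : Prop :=
  ∀ (J : Type v) [SmallCategory J] [IsFiltered J],
    Nonempty (PreservesColimitsOfShape J (coyoneda.obj (Opposite.op X)))

section Monoidal
variable [MonoidalCategory C]

/-- `n`-fold tensor power of an object. -/
def tpow (x : C) : ℕ → C
  | 0 => 𝟙_ C
  | n + 1 => x ⊗ tpow x n

/-- `n`-fold tensor power of a morphism. -/
def tpowHom {x y : C} (f : x ⟶ y) : ∀ n, tpow x n ⟶ tpow y n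
  | 0 => 𝟙 _
  | n + 1 => f ⊗ₘ tpowHom f n

/-- `n`-fold tensor power of a morphism out of the unit, as a morphism out of the unit. -/
def upow {z : C} (g : 𝟙_ C ⟶ z) : ∀ n, 𝟙_ C ⟶ tpow z n
  | 0 => 𝟙 _
  | n + 1 => (λ_ (𝟙_ C)).inv ≫ (g ⊗ₘ upow g n)

/-- A ⊗-multiplicative class of objects: contains the unit and is closed under `⊗`. -/
def IsTensorMultiplicative (S : Set C) : Prop :=
  𝟙_ C ∈ S ∧ ∀ ⦃a⦄, a ∈ S → ∀ ⦃b⦄, b ∈ S → (a ⊗ b) ∈ S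

end Monoidal

section SerrePlain
variable [Abelian C]

/-- A Serre subcategory (as a class of objects): contains the zeros and is closed under
subobjects, quotients and extensions. -/
def IsSerre (B : Set C) : Prop :=
  (∀ X : C, IsZero X → X ∈ B) ∧
  (∀ ⦃X Y : C⦄ (i : X ⟶ Y), Mono i → Y ∈ B → X ∈ B) ∧
  (∀ ⦃X Y : C⦄ (p : X ⟶ Y), Epi p → X ∈ B → Y ∈ B) ∧
  (∀ S : ShortComplex C, S.ShortExact → S.X₁ ∈ B → S.X₃ ∈ B → S.X₂ ∈ B)

end SerrePlain

section SerrePlain2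
variable [Abelian C]

/-- A Serre subcategory closed under (small) coproducts (no tensor). -/
def IsLocalizingSub (L : Set C) : Prop :=
  IsSerre L ∧ ∀ (J : Type v) (g : J → C) [HasCoproduct g], (∀ j, g j ∈ L) → (∐ g) ∈ L

/-- The localizing subcategory generated by a class of objects (no tensor). -/
def LocSubGen (S : Set C) : Set C :=
  {M | ∀ L : Set C, IsLocalizingSub L → S ⊆ L → M ∈ L}

end SerrePlain2

section Serre
variable [Abelian C] [MonoidalCategory C]

/-- A Serre ⊗-ideal: a Serre subcategory closed under tensoring with arbitrary objects. -/
def IsSerreTensorIdeal (B : Set C) : Prop :=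
  IsSerre B ∧ ∀ (X : C) ⦃M : C⦄, M ∈ B → (X ⊗ M) ∈ B

/-- A maximal proper Serre ⊗-ideal. -/
def IsMaxSerreTensorIdeal (B : Set C) : Prop :=
  IsSerreTensorIdeal B ∧ 𝟙_ C ∉ B ∧
    ∀ B' : Set C, IsSerreTensorIdeal B' → 𝟙_ C ∉ B' → B ⊆ B' → B' = B

/-- The Serre ⊗-ideal generated by a class of objects. -/
def SerreTensorGen (S : Set C) : Set C :=
  {M | ∀ L : Set C, IsSerreTensorIdeal L → S ⊆ L → M ∈ L}

/-- A localizing ⊗-ideal: a Serre ⊗-ideal closed under (small) coproducts. -/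
def IsLocalizingTensorIdeal (L : Set C) : Prop :=
  IsSerreTensorIdeal L ∧
    ∀ (J : Type v) (g : J → C) [HasCoproduct g], (∀ j, g j ∈ L) → (∐ g) ∈ L

/-- The localizing ⊗-ideal generated by a class of objects. -/
def LocTensorGen (S : Set C) : Set C :=
  {M | ∀ L : Set C, IsLocalizingTensorIdeal L → S ⊆ L → M ∈ L}

/-- A Serre ⊗-ideal of the full (abelian, monoidal) subcategory of objects in `P`
(e.g. `P` = finitely presented objects). -/
def IsSerreTensorIdealIn (P B : Set C) : Prop :=
  B ⊆ P ∧
  (∀ X : C, IsZero X → X ∈ P → X ∈ B) ∧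
  (∀ ⦃X Y : C⦄ (i : X ⟶ Y), Mono i → X ∈ P → Y ∈ B → X ∈ B) ∧
  (∀ ⦃X Y : C⦄ (p : X ⟶ Y), Epi p → Y ∈ P → X ∈ B → Y ∈ B) ∧
  (∀ S : ShortComplex C, S.ShortExact → S.X₂ ∈ P → S.X₁ ∈ B → S.X₃ ∈ B → S.X₂ ∈ B) ∧
  (∀ ⦃X : C⦄, X ∈ P → ∀ ⦃M : C⦄, M ∈ B → (X ⊗ M) ∈ B)

/-- A maximal proper Serre ⊗-ideal of the full subcategory of objects in `P`. -/
def IsMaxSerreTensorIdealIn (P B : Set C) : Prop :=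
  IsSerreTensorIdealIn P B ∧ 𝟙_ C ∉ B ∧
    ∀ B' : Set C, IsSerreTensorIdealIn P B' → 𝟙_ C ∉ B' → B ⊆ B' → B' = B

end Serre

section Tri
variable [Preadditive C] [HasZeroObject C] [HasShift C ℤ]
  [∀ n : ℤ, (shiftFunctor C n).Additive] [Pretriangulated C] [MonoidalCategory C]

/-- A thick ⊗-ideal of a tensor-triangulated category. -/
def IsThickTensorIdeal (P : Set C) : Prop :=
  (∀ ⦃x y : C⦄, (x ≅ y) → x ∈ P → y ∈ P) ∧
  (∀ (x : C) (n : ℤ), x ∈ P → (shiftFunctor C n).obj x ∈ P) ∧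
  (∀ T : Triangle C, T ∈ (distTriang C) → T.obj₁ ∈ P → T.obj₂ ∈ P → T.obj₃ ∈ P) ∧
  (∀ x y : C, (∃ (i : x ⟶ y) (r : y ⟶ x), i ≫ r = 𝟙 x) → y ∈ P → x ∈ P) ∧
  (∀ (x : C) ⦃y : C⦄, y ∈ P → (x ⊗ y) ∈ P)

/-- A prime thick ⊗-ideal. -/
def IsPrimeThickTensorIdeal (P : Set C) : Prop :=
  IsThickTensorIdeal P ∧ (∃ x : C, x ∉ P) ∧
    ∀ x y : C, (x ⊗ y) ∈ P → x ∈ P ∨ y ∈ P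

end Tri

/-- Let `Q : A ⥤ A'` be an exact (Gabriel-quotient) functor on a locally
coherent Grothendieck symmetric monoidal category `A`, whose kernel is the localizing ideal
`⟨B⟩` generated by a Serre ⊗-ideal `B` of the finitely presented objects. Let `f : 𝟙 ⟶ F`
with `F` ⊗-flat, and suppose every finitely presented subobject `M` of `ker f` satisfies
`f ⊗ id_M = 0` and `M ∈ B`. Then `ker f ∈ ⟨B⟩` and `Q(f)` is a monomorphism. -/
theorem stmt14 {A : Type u} [Category.{v} A] {A' : Type u₂} [Category.{v₂} A']
    [Abelian A] [Abelian A'] [MonoidalCategory A] [SymmetricCategory A]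
    [MonoidalPreadditive A] [HasCoproducts.{v} A]
    (hAcoh : ∀ M : A, ∃ (J : Cat.{v, v}) (_ : IsFiltered J) (D : J ⥤ A) (c : Cocone D),
      Nonempty (IsColimit c) ∧ c.pt = M ∧ ∀ j : J, IsFP (D.obj j) ∧ Mono (c.ι.app j))
    (B : Set A) (hB : IsSerreTensorIdealIn {M : A | IsFP M} B)
    (Q : A ⥤ A') [PreservesFiniteLimits Q] [PreservesFiniteColimits Q]
    (hQker : ∀ M : A, IsZero (Q.obj M) ↔ M ∈ LocTensorGen B)
    (F : A) (hF : PreservesFiniteLimits (tensorLeft F)) (f : 𝟙_ A ⟶ F)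
    (hsub : ∀ (M : A) (i : M ⟶ kernel f), Mono i → IsFP M → f ▷ M = 0 ∧ M ∈ B) :
    kernel f ∈ LocTensorGen B ∧ Mono (Q.map f) := by
  obtain ⟨J, hJ, D, c, ⟨hc⟩, hpt, hjs⟩ := hAcoh (kernel f)
  have hDB : ∀ j : J, D.obj j ∈ B := by
    intro j
    have hm : Mono (c.ι.app j ≫ eqToHom hpt) := by
      have := (hjs j).2
      exact mono_comp _ _
    exact (hsub (D.obj j) (c.ι.app j ≫ eqToHom hpt) hm (hjs j).1).2
  have hker : kernel f ∈ LocTensorGen B := by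
    intro L hL hBL
    have hcop : (∐ fun j : J => D.obj j) ∈ L :=
      hL.2 J (fun j => D.obj j) (fun j => hBL (hDB j))
    have hepi : Epi (Sigma.desc c.ι.app) := by
      constructor
      intro Z g h hgh
      apply hc.hom_ext
      intro j
      have := congrArg (fun t => Sigma.ι (fun j : J => D.obj j) j ≫ t) hgh
      simpa using this
    have hLc : c.pt ∈ L := hL.1.1.2.2.1 (Sigma.desc c.ι.app) hepi hcop
    exact hpt ▸ hLc
  refine ⟨hker, ?_⟩
  have hz : IsZero (Q.obj (kernel f)) := (hQker _).2 hker
  have : IsZero (kernel (Q.map f)) := hz.of_iso (PreservesKernel.iso Q f).symm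
  exact Preadditive.mono_of_kernel_iso_zero (this.isoZero)
end Balmer
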